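/- arXiv:1310.6847 — 2 statements merged into one kernel-verified Lean document; each statement's English description precedes it below -/
import Mathlib

section
/- Soundness of implicit abstraction for safety: if every state reachable in the abstracted system (I, AbsT_P) satisfies the property P_good, then every state reachable in the concrete system (I, T) satisfies P_good. -/
def EQP {S : Type*} (P : Set (S → Prop)) (s t : S) : Prop := ∀ p ∈ P, (p s ↔ p t)

def AbsT {S : Type*} (P : Set (S → Prop)) (T : S → S → Prop) (x x' : S) : Prop :=
  ∃ xb xb', EQP P x xb ∧ T xb xb' ∧ EQP P xb' x'

/-- `s` is reachable in the system `(Init, R)`. -/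
def Reachable {S : Type*} (Init : S → Prop) (R : S → S → Prop) (s : S) : Prop :=
  ∃ (k : ℕ) (f : ℕ → S), Init (f 0) ∧ (∀ i < k, R (f i) (f (i+1))) ∧ f k = s

theorem abs_safety_sound {S : Type*} (P : Set (S → Prop)) (I Pgood : S → Prop)
    (T : S → S → Prop)
    (habs : ∀ s, Reachable I (AbsT P T) s → Pgood s) :
    ∀ s, Reachable I T s → Pgood s := by
  intro s ⟨k, f, h0, hstep, hk⟩
  exact habs s ⟨k, f, h0, fun i hi => ⟨f i, f (i+1), fun p _ => Iff.rfl, hstep i hi, fun p _ => Iff.rfl⟩, hk⟩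
end

section
/- Fixpoint termination condition of IC3: suppose F_0, ..., F_k is a sequence of state predicates with F_0 = I, F_i ⊨ F_{i+1} for all i < k, F_i(x) ∧ T(x, x') ⊨ F_{i+1}(x') for all i < k, and F_i ⊨ P_good for all i < k. If F_j = F_{j+1} for some j < k (extensionally equal), then F_j is an inductive invariant of (I, T), and hence every reachable state of (I, T) satisfies P_good. -/
theorem ic3_fixpoint {S : Type*} (I Pgood : S → Prop) (T : S → S → Prop)
    {k : ℕ} (F : Fin (k+1) → S → Prop)
    (h0 : F 0 = I)
    (h1 : ∀ i : Fin k, ∀ s, F i.castSucc s → F i.succ s)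
    (h2 : ∀ i : Fin k, ∀ s s', F i.castSucc s → T s s' → F i.succ s')
    (h3 : ∀ i : Fin k, ∀ s, F i.castSucc s → Pgood s)
    (j : Fin k) (hfix : F j.castSucc = F j.succ) :
    ((∀ s, I s → F j.castSucc s) ∧
     (∀ s s', F j.castSucc s → T s s' → F j.castSucc s')) ∧
    (∀ s, Reachable I T s → Pgood s) := by
  -- monotonicity: F 0 implies F m for any m ≤ k
  have mono : ∀ m : ℕ, ∀ hm : m ≤ k, ∀ s, I s → F ⟨m, Nat.lt_succ_of_le hm⟩ s := by
    intro m
    induction m with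
    | zero => intro hm s hs; have : F 0 s := h0 ▸ hs; simpa using this
    | succ n ih =>
      intro hm s hs
      have hn : n ≤ k := Nat.le_of_succ_le hm
      have hnk : n < k := hm
      have := h1 ⟨n, hnk⟩ s (by simpa [Fin.castSucc] using ih hn s hs)
      simpa [Fin.succ] using this
  have hinit : ∀ s, I s → F j.castSucc s := by
    intro s hs
    have := mono j.1 (Nat.le_of_lt j.2) s hs
    simpa [Fin.castSucc, Fin.castAdd, Fin.castLE] using this
  have hind : ∀ s s', F j.castSucc s → T s s' → F j.castSucc s' := by
    intro s s' hFs hT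
    have := h2 j s s' hFs hT
    rw [hfix]; exact this
  refine ⟨⟨hinit, hind⟩, ?_⟩
  intro s hs
  obtain ⟨n, f, hI, hR, hend⟩ := hs
  have key : ∀ m ≤ n, F j.castSucc (f m) := by
    intro m
    induction m with
    | zero => intro _; exact hinit _ hI
    | succ p ih =>
      intro hp
      exact hind _ _ (ih (Nat.le_of_succ_le hp)) (hR p hp)
  have := key n le_rfl
  rw [hend] at this
  exact h3 j s this
end
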